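/- For every integer L ≥ 2, the q-series H_{L,1}(q) := q/((q;q)_{L-1}(1-q^{L+1})) − (1/(q²;q)_L − 1) has non-negative coefficients in its power series expansion in q. -/

import Mathlib

open PowerSeries

/-- `(q^s; q)_n` as a formal power series in `q = X` over `ℚ`. -/
noncomputable def qp (s n : ℕ) : PowerSeries ℚ :=
  ∏ i ∈ Finset.range n, (1 - (X : PowerSeries ℚ) ^ (s + i))

/-- geometric-like series `Σ_{m ∣ n} X^n = (1-X^m)⁻¹`. -/
noncomputable def geom (m : ℕ) : PowerSeries ℚ :=
  PowerSeries.mk fun n => if m ∣ n then 1 else 0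

/-- The series with coefficient 1 at `n` when `0 < n`, `¬ L ∣ n`, `n ∉ s`. -/
noncomputable def Bs (L : ℕ) (s : Finset ℕ) : PowerSeries ℚ :=
  PowerSeries.mk fun n => if 0 < n ∧ ¬ L ∣ n ∧ n ∉ s then 1 else 0

/-- nonnegativity of all coefficients -/
def NN (f : PowerSeries ℚ) : Prop := ∀ n, 0 ≤ coeff n f

lemma NN.add {f g : PowerSeries ℚ} (hf : NN f) (hg : NN g) : NN (f + g) := by
  intro n; rw [map_add]; exact add_nonneg (hf n) (hg n)

lemma NN.mul {f g : PowerSeries ℚ} (hf : NN f) (hg : NN g) : NN (f * g) := by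
  intro n
  rw [PowerSeries.coeff_mul]
  exact Finset.sum_nonneg fun p _ => mul_nonneg (hf p.1) (hg p.2)

lemma NN_geom (m : ℕ) : NN (geom m) := by
  intro n
  simp only [geom, coeff_mk]
  split <;> norm_num

lemma NN_Bs (L : ℕ) (s : Finset ℕ) : NN (Bs L s) := by
  intro n
  simp only [Bs, coeff_mk]
  split <;> norm_num

lemma geom_mul (m : ℕ) (hm : 0 < m) : (1 - (X : PowerSeries ℚ) ^ m) * geom m = 1 := by
  have h : (1 - (X : PowerSeries ℚ) ^ m) * geom m = geom m - geom m * X ^ m := by ring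
  rw [h]
  ext n
  rw [map_sub, PowerSeries.coeff_mul_X_pow', PowerSeries.coeff_one]
  simp only [geom, coeff_mk]
  have hiff : m ≤ n → (m ∣ n ↔ m ∣ n - m) := by
    intro hle
    constructor
    · exact fun h => Nat.dvd_sub h dvd_rfl
    · intro h
      have := Nat.dvd_add h (dvd_refl m)
      rwa [Nat.sub_add_cancel hle] at this
  rcases Nat.eq_zero_or_pos n with rfl | hn0
  · rw [if_pos (dvd_zero m), if_neg (by omega : ¬ m ≤ 0), if_pos (rfl : (0:ℕ) = 0)]
    norm_num
  · rw [if_neg (by omega : ¬ n = 0)]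
    by_cases h2 : m ≤ n
    · rw [if_pos h2]
      by_cases h1 : m ∣ n
      · rw [if_pos h1, if_pos ((hiff h2).mp h1)]; norm_num
      · rw [if_neg h1, if_neg (fun hh => h1 ((hiff h2).mpr hh))]; norm_num
    · rw [if_neg h2, if_neg (fun h1 => h2 (Nat.le_of_dvd hn0 h1))]; norm_num

lemma constCoeff_one_sub_pow (m : ℕ) (hm : 0 < m) :
    constantCoeff (1 - (X : PowerSeries ℚ) ^ m) ≠ 0 := by
  rw [map_sub, map_one, map_pow, PowerSeries.constantCoeff_X]
  simp [zero_pow (by omega : m ≠ 0)]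

lemma inv_one_sub_pow (m : ℕ) (hm : 0 < m) :
    (1 - (X : PowerSeries ℚ) ^ m)⁻¹ = geom m := by
  rw [PowerSeries.inv_eq_iff_mul_eq_one (constCoeff_one_sub_pow m hm)]
  rw [mul_comm]
  exact geom_mul m hm

lemma Bs_insert (L : ℕ) (s : Finset ℕ) (a : ℕ) (ha : a ∉ s) (ha1 : 0 < a) (haL : ¬ L ∣ a) :
    Bs L s = Bs L (insert a s) + (X : PowerSeries ℚ) ^ a := by
  ext n
  rw [map_add, PowerSeries.coeff_X_pow]
  simp only [Bs, coeff_mk, Finset.mem_insert]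
  by_cases hna : n = a
  · subst hna
    rw [if_pos ⟨ha1, haL, ha⟩, if_neg (by tauto), if_pos rfl]
    ring
  · rw [if_neg hna]
    by_cases h : 0 < n ∧ ¬ L ∣ n ∧ n ∉ s
    · rw [if_pos h, if_pos ⟨h.1, h.2.1, by tauto⟩]; ring
    · rw [if_neg h, if_neg (by tauto)]; ring

lemma main (L : ℕ) (s : Finset ℕ) (hs : ∀ m ∈ s, 0 < m ∧ ¬ L ∣ m) :
    NN (Bs L ∅ * (∏ m ∈ s, (1 - (X : PowerSeries ℚ) ^ m))⁻¹ + 1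
        - (∏ m ∈ s, (1 - (X : PowerSeries ℚ) ^ m))⁻¹ - Bs L s) := by
  induction s using Finset.induction_on with
  | empty =>
      have : Bs L ∅ * (∏ m ∈ (∅ : Finset ℕ), (1 - (X : PowerSeries ℚ) ^ m))⁻¹ + 1
        - (∏ m ∈ (∅ : Finset ℕ), (1 - (X : PowerSeries ℚ) ^ m))⁻¹ - Bs L ∅ = 0 := by
        rw [Finset.prod_empty, inv_one]; ring
      rw [this]; intro n; simp
  | @insert a s ha ih =>
      have ha1 : 0 < a := (hs a (Finset.mem_insert_self a s)).1
      have haL : ¬ L ∣ a := (hs a (Finset.mem_insert_self a s)).2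
      have hs' : ∀ m ∈ s, 0 < m ∧ ¬ L ∣ m := fun m hm => hs m (Finset.mem_insert_of_mem hm)
      have hG := geom_mul a ha1
      have hXa : (X : PowerSeries ℚ) ^ a * geom a = geom a - 1 := by
        linear_combination -hG
      have hBs := Bs_insert L s a ha ha1 haL
      have hWinv : (∏ m ∈ insert a s, (1 - (X : PowerSeries ℚ) ^ m))⁻¹
          = (∏ m ∈ s, (1 - (X : PowerSeries ℚ) ^ m))⁻¹ * geom a := by
        rw [Finset.prod_insert ha, PowerSeries.mul_inv_rev, inv_one_sub_pow a ha1, mul_comm]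
      have key : Bs L ∅ * (∏ m ∈ insert a s, (1 - (X : PowerSeries ℚ) ^ m))⁻¹ + 1
          - (∏ m ∈ insert a s, (1 - (X : PowerSeries ℚ) ^ m))⁻¹ - Bs L (insert a s)
          = (Bs L ∅ * (∏ m ∈ s, (1 - (X : PowerSeries ℚ) ^ m))⁻¹ + 1
            - (∏ m ∈ s, (1 - (X : PowerSeries ℚ) ^ m))⁻¹ - Bs L s) * geom a
            + Bs L (insert a s) * (geom a - 1) := by
        rw [hWinv, hBs]
        linear_combination hXa
      rw [key]
      have hNNg : NN (geom a - 1) := by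
        intro n
        rw [map_sub, PowerSeries.coeff_one]
        simp only [geom, coeff_mk]
        rcases Nat.eq_zero_or_pos n with rfl | hn
        · rw [if_pos (dvd_zero a), if_pos (rfl : (0:ℕ) = 0)]; norm_num
        · rw [if_neg (by omega : ¬ n = 0)]
          split <;> norm_num
      exact ((ih hs').mul (NN_geom a)).add ((NN_Bs L _).mul hNNg)

lemma B_eq (L : ℕ) (hL : 2 ≤ L) :
    Bs L ∅ = (X : PowerSeries ℚ) * geom 1 - geom L + 1 := by
  ext n
  rw [map_add, map_sub, PowerSeries.coeff_one]
  have hXg : coeff n ((X : PowerSeries ℚ) * geom 1) = if 0 < n then 1 else 0 := by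
    have h : (X : PowerSeries ℚ) * geom 1 = geom 1 * X ^ 1 := by ring
    rw [h, PowerSeries.coeff_mul_X_pow']
    by_cases hn : 1 ≤ n
    · rw [if_pos hn, if_pos (by omega : 0 < n)]
      simp [geom]
    · rw [if_neg hn, if_neg (by omega : ¬ 0 < n)]
  rw [hXg]
  simp only [Bs, geom, coeff_mk, Finset.notMem_empty, not_false_iff, and_true]
  by_cases hn : n = 0
  · subst hn
    rw [if_neg (by omega : ¬ ((0:ℕ) < 0 ∧ ¬ L ∣ 0)), if_neg (by omega : ¬ (0:ℕ) < 0),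
      if_pos (dvd_zero L), if_pos (rfl : (0:ℕ) = 0)]
    norm_num
  · rw [if_neg hn, if_pos (by omega : 0 < n)]
    by_cases hd : L ∣ n
    · rw [if_neg (fun h => h.2 hd), if_pos hd]; norm_num
    · rw [if_pos ⟨by omega, hd⟩, if_neg hd]; norm_num

theorem stmt3 (L : ℕ) (hL : 2 ≤ L) (n : ℕ) :
    0 ≤ coeff n
      ((X : PowerSeries ℚ) * (qp 1 (L - 1) * (1 - X ^ (L + 1)))⁻¹ - ((qp 2 L)⁻¹ - 1)) := by
  set M : Finset ℕ := insert (L + 1) (Finset.Ico 2 L) with hM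
  have hLM : L ∉ M := by
    simp only [hM, Finset.mem_insert, Finset.mem_Ico]
    omega
  have h1M : (1 : ℕ) ∉ Finset.Ico 2 L := by simp
  have hL1 : (L + 1) ∉ Finset.Ico 2 L := by simp
  set R : PowerSeries ℚ := ∏ m ∈ M, (1 - (X : PowerSeries ℚ) ^ m) with hR
  have hqp1 : qp 1 (L - 1) * (1 - (X : PowerSeries ℚ) ^ (L + 1)) = (1 - X ^ 1) * R := by
    have e1 : qp 1 (L - 1) = ∏ m ∈ Finset.Ico 1 L, (1 - (X : PowerSeries ℚ) ^ m) := by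
      rw [qp, Finset.prod_Ico_eq_prod_range]
    have e2 : Finset.Ico 1 L = insert 1 (Finset.Ico 2 L) := by
      ext x; simp only [Finset.mem_Ico, Finset.mem_insert]; omega
    rw [e1, e2, Finset.prod_insert h1M, hR, hM, Finset.prod_insert hL1]
    ring
  have hqp2 : qp 2 L = (1 - (X : PowerSeries ℚ) ^ L) * R := by
    have e1 : qp 2 L = ∏ m ∈ Finset.Ico 2 (L + 2), (1 - (X : PowerSeries ℚ) ^ m) := by
      rw [qp, Finset.prod_Ico_eq_prod_range, Nat.add_sub_cancel]
    have e2 : Finset.Ico 2 (L + 2) = insert L M := by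
      ext x; simp only [hM, Finset.mem_Ico, Finset.mem_insert]; omega
    rw [e1, e2, Finset.prod_insert hLM, hR]
  have hMgood : ∀ m ∈ M, 0 < m ∧ ¬ L ∣ m := by
    intro m hm
    simp only [hM, Finset.mem_insert, Finset.mem_Ico] at hm
    constructor
    · omega
    · rcases hm with rfl | hm
      · intro hd
        have := (Nat.dvd_add_right (dvd_refl L)).mp hd
        have := Nat.le_of_dvd one_pos this
        omega
      · intro hd
        have := Nat.le_of_dvd (by omega) hd
        omega
  have hid : (X : PowerSeries ℚ) * (qp 1 (L - 1) * (1 - X ^ (L + 1)))⁻¹ - ((qp 2 L)⁻¹ - 1)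
      = (Bs L ∅ * R⁻¹ + 1 - R⁻¹ - Bs L M) + Bs L M := by
    rw [hqp1, hqp2, PowerSeries.mul_inv_rev, PowerSeries.mul_inv_rev,
      inv_one_sub_pow L (by omega), inv_one_sub_pow 1 one_pos, B_eq L hL]
    ring
  rw [hid, map_add]
  exact add_nonneg (main L M hMgood n) (NN_Bs L M n)
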